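/- Let R be a commutative Noetherian local ring with maximal ideal I and residue field k. Then k is 'cosmall' over R, i.e., R belongs to the thick subcategory of the derived category D(R) generated by k, if and only if R is Artinian. -/

import Mathlib

open CategoryTheory Pretriangulated Limits

universe v u

variable {C : Type u} [Category.{v} C] [HasZeroObject C] [Preadditive C]
  [HasShift C ℤ] [∀ n : ℤ, (shiftFunctor C n).Additive] [Pretriangulated C]

/-- `IsThickBuilt S X` : `X` belongs to the thick subcategory generated by `S`
(the smallest class containing `S` closed under isomorphisms, shifts, extensions in
distinguished triangles, and retracts). -/
inductive IsThickBuilt (S : C) : C → Prop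
  | base : IsThickBuilt S S
  | of_iso {X Y : C} (_ : X ≅ Y) : IsThickBuilt S X → IsThickBuilt S Y
  | shift (X : C) (n : ℤ) : IsThickBuilt S X → IsThickBuilt S (X⟦n⟧)
  | ext₂ {T : Triangle C} (_ : T ∈ distTriang C) :
      IsThickBuilt S T.obj₁ → IsThickBuilt S T.obj₃ → IsThickBuilt S T.obj₂
  | retract {X Y : C} (i : Y ⟶ X) (p : X ⟶ Y) (_ : i ≫ p = 𝟙 Y) :
      IsThickBuilt S X → IsThickBuilt S Y

section Aux

open DerivedCategory

variable {R : Type u} [CommRing R] [HasDerivedCategory.{u} (ModuleCat.{u} R)]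

/-- homology of a single object in degree 0 -/
noncomputable def homologySingleIso (M : ModuleCat.{u} R) :
    (homologyFunctor (ModuleCat.{u} R) 0).obj ((singleFunctor (ModuleCat.{u} R) 0).obj M) ≅ M :=
  (homologyFunctor (ModuleCat.{u} R) 0).mapIso
      (((SingleFunctors.evaluation _ _ 0).mapIso
        (singleFunctorsPostcompQIso (ModuleCat.{u} R))).app M) ≪≫
    (homologyFunctorFactors (ModuleCat.{u} R) 0).app _ ≪≫
    HomologicalComplex.singleObjHomologySelfIso (ComplexShape.up ℤ) 0 M

lemma isZero_homology_single (M : ModuleCat.{u} R) (n : ℤ) (hn : n ≠ 0) :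
    IsZero ((homologyFunctor (ModuleCat.{u} R) n).obj
      ((singleFunctor (ModuleCat.{u} R) 0).obj M)) := by
  refine IsZero.of_iso ?_
    ((homologyFunctor (ModuleCat.{u} R) n).mapIso
      (((SingleFunctors.evaluation _ _ 0).mapIso
        (singleFunctorsPostcompQIso (ModuleCat.{u} R))).app M) ≪≫
      (homologyFunctorFactors (ModuleCat.{u} R) n).app _)
  exact HomologicalComplex.isZero_single_obj_homology (ComplexShape.up ℤ) 0 M n hn

end Aux

section Aux2

open DerivedCategory

variable {R : Type u} [CommRing R] [HasDerivedCategory.{u} (ModuleCat.{u} R)]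

lemma fl_of_exact {S : ShortComplex (ModuleCat.{u} R)} (hS : S.Exact)
    (h1 : IsFiniteLength R S.X₁) (h3 : IsFiniteLength R S.X₃) : IsFiniteLength R S.X₂ := by
  rw [isFiniteLength_iff_isNoetherian_isArtinian] at h1 h3 ⊢
  obtain ⟨n1, a1⟩ := h1
  obtain ⟨n3, a3⟩ := h3
  have h := hS.moduleCat_range_eq_ker
  exact ⟨isNoetherian_of_range_eq_ker S.f.hom S.g.hom h, isArtinian_of_range_eq_ker S.f.hom S.g.hom h⟩

lemma fl_homology_of_thickBuilt {S X : DerivedCategory (ModuleCat.{u} R)}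
    (h : IsThickBuilt S X)
    (hS : ∀ n : ℤ, IsFiniteLength R ((homologyFunctor (ModuleCat.{u} R) n).obj S)) :
    ∀ n : ℤ, IsFiniteLength R ((homologyFunctor (ModuleCat.{u} R) n).obj X) := by
  induction h with
  | base => exact hS
  | of_iso e _ ih =>
      exact fun n => (((homologyFunctor (ModuleCat.{u} R) n).mapIso e).toLinearEquiv).isFiniteLength (ih n)
  | shift Y m _ ih =>
      intro n
      have e : (homologyFunctor (ModuleCat.{u} R) n).obj (Y⟦m⟧) ≅
          (homologyFunctor (ModuleCat.{u} R) (m + n)).obj Y :=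
        ((DerivedCategory.homologyFunctor (ModuleCat.{u} R) 0).shiftIso m n (m + n) rfl).app Y
      exact (e.symm.toLinearEquiv).isFiniteLength (ih (m + n))
  | ext₂ hT _ _ ih1 ih3 =>
      exact fun n => fl_of_exact (DerivedCategory.HomologySequence.exact₂ _ hT n) (ih1 n) (ih3 n)
  | retract i p hip _ ih =>
      intro n
      have h' : (homologyFunctor (ModuleCat.{u} R) n).map i ≫
          (homologyFunctor (ModuleCat.{u} R) n).map p = 𝟙 _ := by
        rw [← Functor.map_comp, hip]
        exact CategoryTheory.Functor.map_id _ _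
      have hinj : Function.Injective ((homologyFunctor (ModuleCat.{u} R) n).map i) :=
        Function.LeftInverse.injective (g := (homologyFunctor (ModuleCat.{u} R) n).map p)
          (fun x => by
            have := LinearMap.congr_fun (congrArg ModuleCat.Hom.hom h') x
            simpa using this)
      have hfl := ih n
      rw [isFiniteLength_iff_isNoetherian_isArtinian] at hfl ⊢
      obtain ⟨hn, ha⟩ := hfl
      exact ⟨isNoetherian_of_injective _ hinj, isArtinian_of_injective _ hinj⟩

end Aux2
section Aux3

open DerivedCategory

variable {R : Type u} [CommRing R] [IsNoetherianRing R] [IsLocalRing R]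
  [HasDerivedCategory.{u} (ModuleCat.{u} R)]

lemma fl_k : IsFiniteLength R (R ⧸ IsLocalRing.maximalIdeal R) := by
  have hsimple : IsSimpleModule R (R ⧸ IsLocalRing.maximalIdeal R) :=
    (isSimpleModule_iff_isCoatom (m := IsLocalRing.maximalIdeal R)).mpr
      (IsLocalRing.maximalIdeal.isMaximal R).out
  have : IsSimpleModule R ((R ⧸ IsLocalRing.maximalIdeal R) ⧸
      (⊥ : Submodule R (R ⧸ IsLocalRing.maximalIdeal R))) :=
    IsSimpleModule.congr (Submodule.quotEquivOfEqBot ⊥ rfl)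
  exact IsFiniteLength.of_simple_quotient (N := ⊥) IsFiniteLength.of_subsingleton

lemma build_of_fl (M : Type u) [AddCommGroup M] [Module R M] (h : IsFiniteLength R M) :
    IsThickBuilt
      ((singleFunctor (ModuleCat.{u} R) 0).obj
        (ModuleCat.of R (R ⧸ IsLocalRing.maximalIdeal R)))
      ((singleFunctor (ModuleCat.{u} R) 0).obj (ModuleCat.of R M)) := by
  induction h with
  | @of_subsingleton M iac im isub =>
      haveI := isub
      haveI : Subsingleton (ModuleCat.of R M) := isub
      have hz : IsZero ((singleFunctor (ModuleCat.{u} R) 0).obj (ModuleCat.of R M)) :=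
        (singleFunctor (ModuleCat.{u} R) 0).map_isZero (ModuleCat.isZero_of_subsingleton _)
      exact IsThickBuilt.retract 0 0 (hz.eq_of_src _ _) IsThickBuilt.base
  | @of_simple_quotient M _ _ N hsimp h ih =>
      let S : ShortComplex (ModuleCat.{u} R) :=
        ShortComplex.mk (ModuleCat.ofHom N.subtype) (ModuleCat.ofHom N.mkQ)
          (by ext x; exact (Submodule.Quotient.mk_eq_zero N).mpr x.2)
      have hmono : Mono S.f := (ModuleCat.mono_iff_injective _).mpr N.injective_subtype
      have hepi : Epi S.g := (ModuleCat.epi_iff_surjective _).mpr (Submodule.mkQ_surjective N)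
      have hex : S.Exact := S.moduleCat_exact_iff_range_eq_ker.mpr (by
        show LinearMap.range N.subtype = LinearMap.ker N.mkQ
        rw [Submodule.range_subtype, Submodule.ker_mkQ])
      have hS : S.ShortExact := ⟨hex⟩
      refine IsThickBuilt.ext₂ hS.singleTriangle_distinguished ?_ ?_
      · exact ih
      · obtain ⟨I, hImax, ⟨e⟩⟩ := isSimpleModule_iff_quot_maximal.mp hsimp
        have hI : I = IsLocalRing.maximalIdeal R := IsLocalRing.eq_maximalIdeal hImax
        subst hI
        exact IsThickBuilt.of_iso
          ((singleFunctor (ModuleCat.{u} R) 0).mapIso e.symm.toModuleIso) IsThickBuilt.base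

end Aux3

/-- Let `R` be a commutative Noetherian local ring with maximal ideal `I`
and residue field `k`.  Then `k` is "cosmall" over `R`, i.e. `R` belongs to the thick
subcategory of the derived category `D(R)` generated by `k`, if and only if `R` is
Artinian. -/
theorem cosmall_iff_artinian
    (R : Type u) [CommRing R] [IsNoetherianRing R] [IsLocalRing R]
    [HasDerivedCategory.{u} (ModuleCat.{u} R)] :
    IsThickBuilt
      ((DerivedCategory.singleFunctor (ModuleCat.{u} R) 0).obj
        (ModuleCat.of R (R ⧸ IsLocalRing.maximalIdeal R)))
      ((DerivedCategory.singleFunctor (ModuleCat.{u} R) 0).obj (ModuleCat.of R R))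
      ↔ IsArtinianRing R := by
  constructor
  · intro h
    have hs : ∀ n : ℤ, IsFiniteLength R
        ((DerivedCategory.homologyFunctor (ModuleCat.{u} R) n).obj
          ((DerivedCategory.singleFunctor (ModuleCat.{u} R) 0).obj
            (ModuleCat.of R (R ⧸ IsLocalRing.maximalIdeal R)))) := by
      intro n
      by_cases hn : n = 0
      · subst hn
        exact ((homologySingleIso
          (ModuleCat.of R (R ⧸ IsLocalRing.maximalIdeal R))).symm.toLinearEquiv).isFiniteLength
            fl_k
      · have hz := isZero_homology_single
          (ModuleCat.of R (R ⧸ IsLocalRing.maximalIdeal R)) n hn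
        exact ((hz.iso (ModuleCat.isZero_of_subsingleton
          (ModuleCat.of R PUnit.{u+1}))).symm.toLinearEquiv).isFiniteLength
            IsFiniteLength.of_subsingleton
    have h0 := fl_homology_of_thickBuilt h hs 0
    have flR : IsFiniteLength R R :=
      ((homologySingleIso (ModuleCat.of R R)).toLinearEquiv).isFiniteLength h0
    exact (isFiniteLength_iff_isNoetherian_isArtinian.mp flR).2
  · intro h
    have flR : IsFiniteLength R R :=
      isFiniteLength_iff_isNoetherian_isArtinian.mpr ⟨inferInstance, h⟩
    exact build_of_fl R flR
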